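/- If φ is an element of the color code automorphism group G with even S3×S3-parity, then the induced map on anyons sends each fermion to a fermion in the same fermion group (F to F, F' to F'); if φ has odd S3×S3-parity, it exchanges the two fermion groups. -/

import Mathlib

/-- Permutations of the six labels `{r,g,b,x,y,z}` (encoded as `0,...,5`) that fix the
flavor labels `x,y,z` (indices `3,4,5`) pointwise, hence permute the colors
`r,g,b` (indices `0,1,2`) arbitrarily. -/
def colorPerms : Set (Equiv.Perm (Fin 6)) := {g | ∀ i : Fin 6, 3 ≤ (i : ℕ) → g i = i}

/-- Permutations fixing the color labels `r,g,b` (indices `0,1,2`) pointwise,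
hence permuting the flavors `x,y,z` arbitrarily. -/
def flavorPerms : Set (Equiv.Perm (Fin 6)) := {g | ∀ i : Fin 6, (i : ℕ) < 3 → g i = i}

/-- The color-flavor swap `(r x)(g y)(b z)`. -/
def cfSwap : Equiv.Perm (Fin 6) := Equiv.swap 0 3 * Equiv.swap 1 4 * Equiv.swap 2 5

/-- The color code automorphism group: the subgroup of `S₆` generated by color
permutations, flavor permutations, and the color-flavor swap. -/
def ccAut : Subgroup (Equiv.Perm (Fin 6)) :=
  Subgroup.closure (colorPerms ∪ flavorPerms ∪ {cfSwap})

/-- The `S₃ × S₃`-parity of a permutation `g`: the sign of `g` itself if `g` preserves the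
color set `{r,g,b}`, and otherwise the sign of `(r x)(g y)(b z) · g` (which then preserves
the color set, i.e. lies in `S₃ × S₃`). -/
def s3s3Parity (g : Equiv.Perm (Fin 6)) : ℤˣ :=
  if ∀ i : Fin 6, (i : ℕ) < 3 → ((g i : ℕ) < 3) then Equiv.Perm.sign g
  else Equiv.Perm.sign (cfSwap * g)

/-- The anyon fusion group of the color code: `A = 𝔽₂⁴` with basis
`e 0 = rx`, `e 1 = rz`, `e 2 = bx`, `e 3 = bz`. -/
abbrev Anyon : Type := Fin 4 → ZMod 2

/-- The braiding pairing on `A`: `(rx, bz)` and `(bx, rz)` are dual pairs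
(`θ(rx,bz) = θ(bx,rz) = 1`, all other basis pairings `0`). -/
def braid (a b : Anyon) : ZMod 2 :=
  a 0 * b 3 + a 3 * b 0 + a 1 * b 2 + a 2 * b 1

/-- The two-component vector attached to each of the six labels `r,g,b,x,y,z`:
`r,x ↦ (1,0)`, `g,y ↦ (1,1)`, `b,z ↦ (0,1)`. -/
def labelVec : Fin 6 → Fin 2 → ZMod 2 := ![![1, 0], ![1, 1], ![0, 1], ![1, 0], ![1, 1], ![0, 1]]

def hiIdx : Fin 4 → Fin 2 := ![0, 0, 1, 1]
def loIdx : Fin 4 → Fin 2 := ![0, 1, 0, 1]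

/-- The boson labelled by a color label and a flavor label (accepted in either order):
`gσ = rσ + bσ` and `cy = cx + cz` in terms of the basis `rx, rz, bx, bz` of `A`. -/
def boson (l₁ l₂ : Fin 6) : Anyon :=
  if (l₁ : ℕ) < 3 then fun k => labelVec l₁ (hiIdx k) * labelVec l₂ (loIdx k)
  else fun k => labelVec l₂ (hiIdx k) * labelVec l₁ (loIdx k)

/-- The linear action induced on the anyon group `A` by a permutation of the six labels:
the basis bosons `rx, rz, bx, bz` are sent to the bosons with permuted labels, extended
linearly. -/
def inducedMap (φ : Equiv.Perm (Fin 6)) (a : Anyon) : Anyon :=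
  a 0 • boson (φ 0) (φ 3) + a 1 • boson (φ 0) (φ 5) +
    a 2 • boson (φ 2) (φ 3) + a 3 • boson (φ 2) (φ 5)

/-- Basis anyons: `e 0 = rx`, `e 1 = rz`, `e 2 = bx`, `e 3 = bz`. -/
def e (i : Fin 4) : Anyon := Pi.single i 1

/-- The nine nonzero bosons `cσ` of the color code. -/
def bosons : Set Anyon :=
  {e 0, e 1, e 2, e 3, e 0 + e 2, e 1 + e 3, e 0 + e 1, e 2 + e 3, e 0 + e 1 + e 2 + e 3}

/-- The six fermions: the nonzero elements of `A` that are not bosons. -/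
def fermions : Set Anyon := {a | a ≠ 0 ∧ a ∉ bosons}

/-- The fermion group `F = {rx+gz, bx+rz, gx+bz}`. -/
def fermF : Set Anyon := {e 0 + e 1 + e 3, e 1 + e 2, e 0 + e 2 + e 3}

/-- The fermion group `F' = {rx+bz, gx+rz, rz+by-type}`: the remaining three fermions. -/
def fermF' : Set Anyon := {e 0 + e 3, e 0 + e 1 + e 2, e 1 + e 2 + e 3}

/-- An element of the color code automorphism group of even `S₃×S₃`-parity sends each
fermion to a fermion in the same fermion group (`F` to `F`, `F'` to `F'`); an element of
odd `S₃×S₃`-parity exchanges the two fermion groups. -/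

def inF (a : Anyon) : Prop := a = e 0 + e 1 + e 3 ∨ a = e 1 + e 2 ∨ a = e 0 + e 2 + e 3
def inF' (a : Anyon) : Prop := a = e 0 + e 3 ∨ a = e 0 + e 1 + e 2 ∨ a = e 1 + e 2 + e 3

instance : DecidablePred inF := fun a => by unfold inF; infer_instance
instance : DecidablePred inF' := fun a => by unfold inF'; infer_instance

def KeyBody (φ : Equiv.Perm (Fin 6)) : Prop :=
    ((∀ i : Fin 6, (i:ℕ) < 3 → ((φ i:ℕ) < 3)) ∨ (∀ i : Fin 6, (i:ℕ) < 3 → 3 ≤ ((φ i:ℕ)))) →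
      (s3s3Parity φ = 1 →
        (∀ f : Anyon, inF f → inF (inducedMap φ f)) ∧
        (∀ f : Anyon, inF' f → inF' (inducedMap φ f))) ∧
      (s3s3Parity φ = -1 →
        (∀ f : Anyon, inF f → inF' (inducedMap φ f)) ∧
        (∀ f : Anyon, inF' f → inF (inducedMap φ f)))

noncomputable instance : DecidablePred KeyBody := fun φ => by unfold KeyBody; infer_instance

set_option maxRecDepth 100000 in
theorem key : ∀ φ : Equiv.Perm (Fin 6), KeyBody φ := by decide

/-- the block condition: `φ` maps the color block into itself or into the flavor block. -/
def Cond (φ : Equiv.Perm (Fin 6)) : Prop :=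
  (∀ i : Fin 6, (i:ℕ) < 3 → ((φ i:ℕ) < 3)) ∨ (∀ i : Fin 6, (i:ℕ) < 3 → 3 ≤ ((φ i:ℕ)))

set_option maxRecDepth 10000 in
theorem h1 : ∀ a : Equiv.Perm (Fin 6), (∀ i : Fin 6, (i:ℕ) < 3 → ((a i:ℕ) < 3)) →
    ∀ i : Fin 6, 3 ≤ (i:ℕ) → 3 ≤ ((a i:ℕ)) := by decide

set_option maxRecDepth 10000 in
theorem h2 : ∀ a : Equiv.Perm (Fin 6), (∀ i : Fin 6, (i:ℕ) < 3 → 3 ≤ ((a i:ℕ))) →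
    ∀ i : Fin 6, 3 ≤ (i:ℕ) → ((a i:ℕ) < 3) := by decide

theorem cond_mul {a b : Equiv.Perm (Fin 6)} (ha : Cond a) (hb : Cond b) : Cond (a * b) := by
  rcases ha with ha | ha <;> rcases hb with hb | hb
  · exact Or.inl fun i hi => ha _ (hb i hi)
  · exact Or.inr fun i hi => h1 a ha _ (hb i hi)
  · exact Or.inr fun i hi => ha _ (hb i hi)
  · exact Or.inl fun i hi => h2 a ha _ (hb i hi)

theorem cond_inv {a : Equiv.Perm (Fin 6)} (ha : Cond a) : Cond a⁻¹ := by
  rcases ha with ha | ha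
  · refine Or.inl fun i hi => ?_
    by_contra h
    have h3 : 3 ≤ ((a⁻¹ i : Fin 6) : ℕ) := le_of_not_gt h
    have := h1 a ha _ h3
    rw [Equiv.Perm.coe_inv, Equiv.apply_symm_apply] at this
    omega
  · refine Or.inr fun i hi => ?_
    by_contra h
    have h3 : ((a⁻¹ i : Fin 6) : ℕ) < 3 := lt_of_not_ge h
    have := ha _ h3
    rw [Equiv.Perm.coe_inv, Equiv.apply_symm_apply] at this
    omega

theorem cond_of_mem : ∀ φ ∈ ccAut, Cond φ := by
  intro φ hφ
  refine Subgroup.closure_induction ?_ (Or.inl fun i hi => hi) (fun x y _ _ hx hy => cond_mul hx hy)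
    (fun x _ hx => cond_inv hx) hφ
  rintro g (hg | hg)
  · rcases hg with hg | hg
    · -- colorPerms: fixes indices ≥ 3
      refine Or.inl fun i hi => ?_
      by_contra h
      have h3 : 3 ≤ ((g i : Fin 6) : ℕ) := le_of_not_gt h
      have := hg _ h3
      have := g.injective this
      omega
    · exact Or.inl fun i hi => by rw [hg i hi]; exact hi
  · rcases hg with rfl
    exact Or.inr (by decide)

theorem parity_fermion_groups :
    ∀ φ ∈ ccAut,
      (s3s3Parity φ = 1 →
        (∀ f ∈ fermF, inducedMap φ f ∈ fermF) ∧
        (∀ f ∈ fermF', inducedMap φ f ∈ fermF')) ∧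
      (s3s3Parity φ = -1 →
        (∀ f ∈ fermF, inducedMap φ f ∈ fermF') ∧
        (∀ f ∈ fermF', inducedMap φ f ∈ fermF)) := by
  intro φ hφ
  have hc : Cond φ := cond_of_mem φ hφ
  have K := key φ hc
  have eF : ∀ a : Anyon, a ∈ fermF ↔ inF a := fun a => by
    simp [fermF, inF, Set.mem_insert_iff, Set.mem_singleton_iff]
  have eF' : ∀ a : Anyon, a ∈ fermF' ↔ inF' a := fun a => by
    simp [fermF', inF', Set.mem_insert_iff, Set.mem_singleton_iff]
  refine ⟨fun hp => ⟨fun f hf => ?_, fun f hf => ?_⟩, fun hp => ⟨fun f hf => ?_, fun f hf => ?_⟩⟩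
  · exact (eF _).2 ((K.1 hp).1 f ((eF f).1 hf))
  · exact (eF' _).2 ((K.1 hp).2 f ((eF' f).1 hf))
  · exact (eF' _).2 ((K.2 hp).1 f ((eF f).1 hf))
  · exact (eF _).2 ((K.2 hp).2 f ((eF' f).1 hf))
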